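/- Let μ, ν be absolutely continuous probability measures on ℝ with finite second moments and let T be the (essentially non-decreasing) optimal transport map from μ to ν. Then along the displacement interpolation g_t = ((1−t)id + tT)_#μ the functional S[μ] = −(1/2)∫∫ |x−y| dμ(x)dμ(y) is affine: S[g_t] = (1−t) S[μ] + t S[ν] for all t ∈ [0,1]. -/

import Mathlib

open MeasureTheory Set


lemma integrable_abs_of_mom (ρ : Measure ℝ) [IsProbabilityMeasure ρ]
    (h : ∫⁻ x, ENNReal.ofReal (x ^ 2) ∂ρ < ⊤) : Integrable (fun x => |x|) ρ := by
  have hsq : Integrable (fun x : ℝ => x ^ 2) ρ := by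
    refine ⟨(measurable_id.pow_const 2).aestronglyMeasurable, ?_⟩
    rw [hasFiniteIntegral_iff_norm]
    have : ∀ x : ℝ, ENNReal.ofReal ‖x ^ 2‖ = ENNReal.ofReal (x ^ 2) := fun x => by
      rw [Real.norm_eq_abs, abs_of_nonneg (sq_nonneg x)]
    simpa [this] using h
  have hb : Integrable (fun x : ℝ => 1 + x ^ 2) ρ := (integrable_const 1).add hsq
  refine hb.mono (measurable_abs.aestronglyMeasurable) (Filter.Eventually.of_forall fun x => ?_)
  simp only [Real.norm_eq_abs, abs_abs]
  have h1 : |x| ≤ 1 + x ^ 2 := by nlinarith [sq_abs x, abs_nonneg x]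
  have h2 : (0:ℝ) ≤ 1 + x ^ 2 := by positivity
  rw [abs_of_nonneg h2]; exact h1

lemma integrable_prod_abs_sub (ρ₁ ρ₂ : Measure ℝ) [IsProbabilityMeasure ρ₁] [IsProbabilityMeasure ρ₂]
    (h1 : Integrable (fun x => |x|) ρ₁) (h2 : Integrable (fun x => |x|) ρ₂) :
    Integrable (fun p : ℝ × ℝ => |p.1 - p.2|) (ρ₁.prod ρ₂) := by
  have hf : Integrable (fun p : ℝ × ℝ => |p.1|) (ρ₁.prod ρ₂) := by
    have := (integrable_map_measure (measurable_abs.aestronglyMeasurable)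
      measurable_fst.aemeasurable (μ := ρ₁.prod ρ₂)).mp ?_
    · exact this
    · rw [Measure.map_fst_prod]; simpa using h1
  have hg : Integrable (fun p : ℝ × ℝ => |p.2|) (ρ₁.prod ρ₂) := by
    have := (integrable_map_measure (measurable_abs.aestronglyMeasurable)
      measurable_snd.aemeasurable (μ := ρ₁.prod ρ₂)).mp ?_
    · exact this
    · rw [Measure.map_snd_prod]; simpa using h2
  refine (hf.add hg).mono ((measurable_fst.sub measurable_snd).abs.aestronglyMeasurable)
    (Filter.Eventually.of_forall fun p => ?_)
  simp only [Real.norm_eq_abs, abs_abs]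
  simp only [Pi.add_apply]
  rw [abs_of_nonneg (by positivity : (0:ℝ) ≤ |p.1| + |p.2|)]
  exact abs_sub _ _
/-- The self-interaction energy `S[μ] = −(1/2)∫∫ |x−y| dμ(x) dμ(y)`. -/
noncomputable def selfEnergy (μ : Measure ℝ) : ℝ :=
  -(1 / 2) * ∫ x, (∫ y, |x - y| ∂μ) ∂μ

lemma selfEnergy_eq_prod (ρ : Measure ℝ) [IsProbabilityMeasure ρ]
    (h : Integrable (fun p : ℝ × ℝ => |p.1 - p.2|) (ρ.prod ρ)) :
    selfEnergy ρ = -(1 / 2) * ∫ p : ℝ × ℝ, |p.1 - p.2| ∂(ρ.prod ρ) := by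
  unfold selfEnergy
  rw [MeasureTheory.integral_integral (f := fun x y => |x - y|) h]

/-- along the displacement interpolation `g_t = ((1−t)id + tT)_#μ`
between absolutely continuous measures with finite second moment, the functional
`S[μ] = −(1/2)∫∫ |x−y| dμ dμ` is affine: `S[g_t] = (1−t)S[μ] + tS[ν]`. -/
theorem selfEnergy_affine_along_geodesic
    (μ ν : Measure ℝ) [IsProbabilityMeasure μ] [IsProbabilityMeasure ν]
    (hμac : μ ≪ volume) (hνac : ν ≪ volume)
    (hμmom : ∫⁻ x, ENNReal.ofReal (x ^ 2) ∂μ < ⊤)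
    (hνmom : ∫⁻ x, ENNReal.ofReal (x ^ 2) ∂ν < ⊤)
    (T : ℝ → ℝ) (hTmeas : Measurable T)
    (hTpush : ν = Measure.map T μ)
    (hTmono : ∃ s : Set ℝ, μ s = 0 ∧ MonotoneOn T sᶜ) :
    ∀ t ∈ Icc (0 : ℝ) 1,
      selfEnergy (Measure.map (fun x => (1 - t) * x + t * T x) μ) =
        (1 - t) * selfEnergy μ + t * selfEnergy ν := by
  rintro t ⟨ht0, ht1⟩
  obtain ⟨s, hs0, hmono⟩ := hTmono
  set s' := toMeasurable μ s with hs'def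
  have hs'0 : μ s' = 0 := by rw [hs'def, measure_toMeasurable]; exact hs0
  have hmono' : MonotoneOn T s'ᶜ :=
    hmono.mono (compl_subset_compl.mpr (subset_toMeasurable _ _))
  set f : ℝ → ℝ := fun x => (1 - t) * x + t * T x with hfdef
  have hf : Measurable f := (measurable_id.const_mul _).add (hTmeas.const_mul _)
  have hμabs := integrable_abs_of_mom μ hμmom
  have hνabs := integrable_abs_of_mom ν hνmom
  have hA : Integrable (fun p : ℝ × ℝ => |p.1 - p.2|) (μ.prod μ) :=
    integrable_prod_abs_sub μ μ hμabs hμabs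
  have hB : Integrable (fun p : ℝ × ℝ => |p.1 - p.2|) (ν.prod ν) :=
    integrable_prod_abs_sub ν ν hνabs hνabs
  have habsmble : Measurable (fun p : ℝ × ℝ => |p.1 - p.2|) :=
    (measurable_fst.sub measurable_snd).abs
  have hprodmap : ν.prod ν = Measure.map (Prod.map T T) (μ.prod μ) := by
    rw [hTpush]; exact Measure.map_prod_map _ _ hTmeas hTmeas
  have hBT : Integrable (fun p : ℝ × ℝ => |T p.1 - T p.2|) (μ.prod μ) := by
    have := (integrable_map_measure habsmble.aestronglyMeasurable
      ((hTmeas.prodMap hTmeas).aemeasurable)).mp (hprodmap ▸ hB)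
    exact this
  have hF : Integrable (fun p : ℝ × ℝ => |f p.1 - f p.2|) (μ.prod μ) := by
    refine ((hA.const_mul (1 - t)).add (hBT.const_mul t)).mono
      ((((hf.comp measurable_fst).sub (hf.comp measurable_snd)).abs).aestronglyMeasurable)
      (Filter.Eventually.of_forall fun p => ?_)
    simp only [Real.norm_eq_abs, abs_abs, Pi.add_apply]
    have h1 : |f p.1 - f p.2| ≤ (1 - t) * |p.1 - p.2| + t * |T p.1 - T p.2| := by
      have : f p.1 - f p.2 = (1 - t) * (p.1 - p.2) + t * (T p.1 - T p.2) := by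
        simp only [hfdef]; ring
      rw [this]
      calc |(1 - t) * (p.1 - p.2) + t * (T p.1 - T p.2)|
          ≤ |(1 - t) * (p.1 - p.2)| + |t * (T p.1 - T p.2)| := abs_add_le _ _
        _ = (1 - t) * |p.1 - p.2| + t * |T p.1 - T p.2| := by
            rw [abs_mul, abs_mul, abs_of_nonneg (by linarith : (0:ℝ) ≤ 1 - t),
              abs_of_nonneg ht0]
    refine h1.trans (le_abs_self _)
  -- a.e. equality
  have hnull1 : μ.prod μ {p : ℝ × ℝ | p.1 ∈ s'} = 0 := by
    have : {p : ℝ × ℝ | p.1 ∈ s'} = s' ×ˢ (univ : Set ℝ) := by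
      ext p; simp [Set.mem_prod]
    rw [this, Measure.prod_prod, hs'0, zero_mul]
  have hnull2 : μ.prod μ {p : ℝ × ℝ | p.2 ∈ s'} = 0 := by
    have : {p : ℝ × ℝ | p.2 ∈ s'} = (univ : Set ℝ) ×ˢ s' := by
      ext p; simp [Set.mem_prod]
    rw [this, Measure.prod_prod, hs'0, mul_zero]
  have hae1 : ∀ᵐ p : ℝ × ℝ ∂μ.prod μ, p.1 ∉ s' := by
    rw [ae_iff]; simpa using hnull1
  have hae2 : ∀ᵐ p : ℝ × ℝ ∂μ.prod μ, p.2 ∉ s' := by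
    rw [ae_iff]; simpa using hnull2
  have hkey : (fun p : ℝ × ℝ => |f p.1 - f p.2|) =ᵐ[μ.prod μ]
      fun p => (1 - t) * |p.1 - p.2| + t * |T p.1 - T p.2| := by
    filter_upwards [hae1, hae2] with p hp1 hp2
    have hdiff : f p.1 - f p.2 = (1 - t) * (p.1 - p.2) + t * (T p.1 - T p.2) := by
      simp only [hfdef]; ring
    rcases le_total p.1 p.2 with h | h
    · have hT : T p.1 ≤ T p.2 := hmono' hp1 hp2 h
      rw [hdiff, abs_of_nonpos (by nlinarith), abs_of_nonpos (by linarith : p.1 - p.2 ≤ 0),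
        abs_of_nonpos (by linarith : T p.1 - T p.2 ≤ 0)]
      ring
    · have hT : T p.2 ≤ T p.1 := hmono' hp2 hp1 h
      rw [hdiff, abs_of_nonneg (by nlinarith), abs_of_nonneg (by linarith : 0 ≤ p.1 - p.2),
        abs_of_nonneg (by linarith : 0 ≤ T p.1 - T p.2)]
  -- integrals
  have hIB : ∫ p : ℝ × ℝ, |p.1 - p.2| ∂(ν.prod ν)
      = ∫ p : ℝ × ℝ, |T p.1 - T p.2| ∂(μ.prod μ) := by
    rw [hprodmap, integral_map (hTmeas.prodMap hTmeas).aemeasurable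
      habsmble.aestronglyMeasurable]
    simp [Prod.map]
  have hsplit : ∫ p : ℝ × ℝ, |f p.1 - f p.2| ∂(μ.prod μ)
      = (1 - t) * (∫ p : ℝ × ℝ, |p.1 - p.2| ∂(μ.prod μ))
        + t * (∫ p : ℝ × ℝ, |T p.1 - T p.2| ∂(μ.prod μ)) := by
    rw [integral_congr_ae hkey, integral_add (hA.const_mul _) (hBT.const_mul _),
      integral_const_mul, integral_const_mul]
  -- map measure facts
  haveI : IsProbabilityMeasure (Measure.map f μ) := Measure.isProbabilityMeasure_map hf.aemeasurable
  have hmap2 : (Measure.map f μ).prod (Measure.map f μ)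
      = Measure.map (Prod.map f f) (μ.prod μ) := Measure.map_prod_map _ _ hf hf
  have hFint : Integrable (fun p : ℝ × ℝ => |p.1 - p.2|)
      ((Measure.map f μ).prod (Measure.map f μ)) := by
    rw [hmap2]
    exact (integrable_map_measure habsmble.aestronglyMeasurable
      (hf.prodMap hf).aemeasurable).mpr hF
  have hIg : ∫ p : ℝ × ℝ, |p.1 - p.2| ∂((Measure.map f μ).prod (Measure.map f μ))
      = ∫ p : ℝ × ℝ, |f p.1 - f p.2| ∂(μ.prod μ) := by
    rw [hmap2, integral_map (hf.prodMap hf).aemeasurable habsmble.aestronglyMeasurable]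
    rfl
  rw [selfEnergy_eq_prod _ hFint, selfEnergy_eq_prod _ hA, selfEnergy_eq_prod _ hB,
    hIg, hsplit, hIB]
  ring
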